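/- Let n, d ≥ 1, let U be an invertible n×n real matrix, λ : Fin n → ℝ, L = U (Matrix.diagonal λ) U⁻¹, and let A be a d×d real matrix. Let c, x₀ ∈ ℝⁿ, γ, β ∈ ℝᵈ with γᵀ β ≠ 0, and define the observations y k = (c ⊗ γ)ᵀ *ᵥ ((I_n ⊗ A + L ⊗ I_d)^k *ᵥ (x₀ ⊗ β)) and the moments m k = Σ_i ω i * (λ i)^k with ω i = (Uᵀ c) i * (U⁻¹ *ᵥ x₀) i. Then for every N ≥ 1, the moment vector (m 0, …, m (N−1)) is the unique solution of the lower-triangular linear system T *ᵥ m = y, where T k s = (k choose s) * (γᵀ A^{k−s} β) for s ≤ k and T k s = 0 otherwise. -/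
import Mathlib


open Matrix Finset
open scoped Kronecker

/-- Kronecker product of two vectors. -/
def vecKron {n d : ℕ} (x : Fin n → ℝ) (y : Fin d → ℝ) : Fin n × Fin d → ℝ :=
  fun p => x p.1 * y p.2

lemma kron_dot {n d : ℕ} (a u : Fin n → ℝ) (b v : Fin d → ℝ)
    (M : Matrix (Fin n) (Fin n) ℝ) (P : Matrix (Fin d) (Fin d) ℝ) :
    vecKron a b ⬝ᵥ ((M ⊗ₖ P) *ᵥ vecKron u v) = (a ⬝ᵥ M *ᵥ u) * (b ⬝ᵥ P *ᵥ v) := by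
  simp only [dotProduct]
  rw [Finset.sum_mul_sum]
  simp only [mulVec, dotProduct, vecKron, kroneckerMap_apply, Fintype.sum_prod_type]
  refine Finset.sum_congr rfl fun i _ => Finset.sum_congr rfl fun j _ => ?_
  rw [mul_mul_mul_comm, Finset.sum_mul_sum]
  simp only [Finset.mul_sum]
  refine Finset.sum_congr rfl fun i' _ => Finset.sum_congr rfl fun j' _ => by ring

lemma kron_pow_left {n d : ℕ} (L : Matrix (Fin n) (Fin n) ℝ) (s : ℕ) :
    (L ⊗ₖ (1 : Matrix (Fin d) (Fin d) ℝ)) ^ s = (L ^ s) ⊗ₖ (1 : Matrix (Fin d) (Fin d) ℝ) := by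
  induction s with
  | zero => simp [Matrix.one_kronecker_one]
  | succ k ih => rw [pow_succ, pow_succ, ih, ← Matrix.mul_kronecker_mul, Matrix.one_mul]

lemma kron_pow_right {n d : ℕ} (A : Matrix (Fin d) (Fin d) ℝ) (s : ℕ) :
    ((1 : Matrix (Fin n) (Fin n) ℝ) ⊗ₖ A) ^ s = (1 : Matrix (Fin n) (Fin n) ℝ) ⊗ₖ (A ^ s) := by
  induction s with
  | zero => simp [Matrix.one_kronecker_one]
  | succ k ih => rw [pow_succ, pow_succ, ih, ← Matrix.mul_kronecker_mul, Matrix.one_mul]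

lemma sum_mulVec' {p : Type*} [Fintype p] {ι : Type*} (s : Finset ι)
    (f : ι → Matrix p p ℝ) (w : p → ℝ) :
    (∑ i ∈ s, f i) *ᵥ w = ∑ i ∈ s, f i *ᵥ w := by
  funext j
  simp only [mulVec, dotProduct, Finset.sum_apply, Matrix.sum_apply, Finset.sum_mul]
  rw [Finset.sum_comm]

lemma dotProduct_sum' {p : Type*} [Fintype p] {ι : Type*} (s : Finset ι)
    (a : p → ℝ) (f : ι → p → ℝ) :
    a ⬝ᵥ (∑ i ∈ s, f i) = ∑ i ∈ s, a ⬝ᵥ f i := by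
  simp only [dotProduct, Finset.sum_apply, Finset.mul_sum]
  rw [Finset.sum_comm]

/-- **Theorem 2.** For the networked dynamics of `n` identical agents with dynamics matrix
`A` coupled through the diagonalizable Laplacian `L = U Λ U⁻¹`, with `γᵀ β ≠ 0`, the
moment vector `(m_0, …, m_{N-1})` of the spectral measure is the unique solution of the
lower-triangular linear system `T m = y` built from the observations. -/
theorem multiagent_moment_recovery (n d : ℕ) (hn : 1 ≤ n) (hd : 1 ≤ d)
    (U : Matrix (Fin n) (Fin n) ℝ) (hU : IsUnit U) (l : Fin n → ℝ)
    (L : Matrix (Fin n) (Fin n) ℝ) (hL : L = U * Matrix.diagonal l * U⁻¹)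
    (A : Matrix (Fin d) (Fin d) ℝ)
    (c x₀ : Fin n → ℝ) (γ β : Fin d → ℝ) (hγβ : γ ⬝ᵥ β ≠ 0)
    (y : ℕ → ℝ)
    (hy : ∀ k, y k = vecKron c γ ⬝ᵥ
      (((1 : Matrix (Fin n) (Fin n) ℝ) ⊗ₖ A + L ⊗ₖ (1 : Matrix (Fin d) (Fin d) ℝ)) ^ k *ᵥ
        vecKron x₀ β))
    (ω : Fin n → ℝ) (hω : ω = fun i => (Uᵀ *ᵥ c) i * (U⁻¹ *ᵥ x₀) i)
    (m : ℕ → ℝ) (hm : ∀ k, m k = ∑ i : Fin n, ω i * l i ^ k)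
    (N : ℕ) (hN : 1 ≤ N)
    (T : Matrix (Fin N) (Fin N) ℝ)
    (hT : T = Matrix.of fun k s : Fin N =>
      if (s : ℕ) ≤ (k : ℕ) then
        ((k : ℕ).choose (s : ℕ) : ℝ) * (γ ⬝ᵥ (A ^ ((k : ℕ) - (s : ℕ)) *ᵥ β))
      else 0) :
    T *ᵥ (fun k : Fin N => m (k : ℕ)) = (fun k : Fin N => y (k : ℕ)) ∧
      ∀ m' : Fin N → ℝ,
        T *ᵥ m' = (fun k : Fin N => y (k : ℕ)) → m' = fun k : Fin N => m (k : ℕ) := by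
  have hUdet : IsUnit U.det := (Matrix.isUnit_iff_isUnit_det U).mp hU
  -- L^s = U * (diagonal l)^s * U⁻¹
  have hLpow : ∀ s : ℕ, L ^ s = U * (Matrix.diagonal l) ^ s * U⁻¹ := by
    intro s
    induction s with
    | zero => simp [Matrix.mul_nonsing_inv U hUdet]
    | succ k ih =>
      rw [pow_succ, ih, hL, pow_succ]
      have : U⁻¹ * (U * Matrix.diagonal l * U⁻¹) = Matrix.diagonal l * U⁻¹ := by
        rw [Matrix.mul_assoc U, ← Matrix.mul_assoc U⁻¹, Matrix.nonsing_inv_mul U hUdet,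
          Matrix.one_mul]
      rw [Matrix.mul_assoc (U * Matrix.diagonal l ^ k), this, ← Matrix.mul_assoc,
        ← Matrix.mul_assoc]
  -- the moments as observations of powers of L
  have hmom : ∀ s : ℕ, c ⬝ᵥ (L ^ s *ᵥ x₀) = m s := by
    intro s
    rw [hLpow s, hm, Matrix.diagonal_pow]
    rw [← Matrix.mulVec_mulVec, ← Matrix.mulVec_mulVec, Matrix.dotProduct_mulVec,
      ← Matrix.mulVec_transpose]
    simp only [dotProduct, Matrix.mulVec_diagonal, hω, Pi.pow_apply]
    exact Finset.sum_congr rfl fun i _ => by ring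
  -- commutation of the Kronecker factors
  have hcomm : Commute (L ⊗ₖ (1 : Matrix (Fin d) (Fin d) ℝ))
      ((1 : Matrix (Fin n) (Fin n) ℝ) ⊗ₖ A) := by
    show _ = _
    rw [← Matrix.mul_kronecker_mul, ← Matrix.mul_kronecker_mul, Matrix.one_mul,
      Matrix.mul_one, Matrix.one_mul, Matrix.mul_one]
  -- the binomial expansion of the observations
  have hyk : ∀ k : ℕ, y k =
      ∑ s ∈ Finset.range (k + 1),
        ((k.choose s : ℝ) * (γ ⬝ᵥ (A ^ (k - s) *ᵥ β))) * m s := by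
    intro k
    rw [hy k, add_comm ((1 : Matrix (Fin n) (Fin n) ℝ) ⊗ₖ A), hcomm.add_pow k,
      sum_mulVec', dotProduct_sum']
    refine Finset.sum_congr rfl fun s hs => ?_
    rw [← Matrix.mulVec_mulVec, Matrix.natCast_mulVec, Matrix.mulVec_smul,
      dotProduct_smul, kron_pow_left, kron_pow_right, ← Matrix.mul_kronecker_mul,
      Matrix.mul_one, Matrix.one_mul, kron_dot, hmom]
    simp only [smul_eq_mul]
    ring
  -- the system identity
  have hfirst : T *ᵥ (fun k : Fin N => m (k : ℕ)) = (fun k : Fin N => y (k : ℕ)) := by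
    funext k
    have hk1 : (k : ℕ) + 1 ≤ N := k.isLt
    set g : ℕ → ℝ := fun t =>
      (if t ≤ (k : ℕ) then ((k : ℕ).choose t : ℝ) * (γ ⬝ᵥ (A ^ ((k : ℕ) - t) *ᵥ β)) else 0)
        * m t with hg
    have h1 : (T *ᵥ fun s : Fin N => m (s : ℕ)) k = ∑ s : Fin N, g (s : ℕ) := by
      rw [hT]
      simp only [mulVec, dotProduct, Matrix.of_apply, hg]
    rw [h1, Fin.sum_univ_eq_sum_range g,
      ← Finset.sum_subset (Finset.range_subset_range.mpr hk1) (fun t _ ht => by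
        have : ¬ t ≤ (k : ℕ) := fun h => ht (Finset.mem_range.mpr (Nat.lt_succ_of_le h))
        simp [hg, this]), hyk]
    exact Finset.sum_congr rfl fun t ht => by
      rw [hg]
      simp [Nat.lt_succ_iff.mp (Finset.mem_range.mp ht)]
  refine ⟨hfirst, ?_⟩
  -- uniqueness: T is lower triangular with nonzero diagonal, hence invertible
  have hdiag : ∀ k : Fin N, T k k = γ ⬝ᵥ β := by
    intro k
    rw [hT]
    simp
  have htri : T.BlockTriangular OrderDual.toDual := by
    intro i j hij
    have hij' : i < j := hij
    have : ¬ ((j : ℕ) ≤ (i : ℕ)) := not_le.mpr hij'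
    rw [hT]
    simp only [Matrix.of_apply]
    exact if_neg this
  have hdet : T.det = (γ ⬝ᵥ β) ^ N := by
    rw [Matrix.det_of_lowerTriangular T htri]
    simp [hdiag]
  have hTdet : IsUnit T.det := by
    rw [hdet]
    exact (pow_ne_zero N hγβ).isUnit
  intro m' hm'
  have h2 : T *ᵥ m' = T *ᵥ (fun k : Fin N => m (k : ℕ)) := hm'.trans hfirst.symm
  have h3 := congrArg (fun v => T⁻¹ *ᵥ v) h2
  simpa [Matrix.mulVec_mulVec, Matrix.nonsing_inv_mul T hTdet] using h3
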